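/- arXiv:math/0406347 — 2 statements merged into one kernel-verified Lean document; each statement's English description precedes it below -/
import Mathlib

section
/- Let 0 < k < 1, k' = √(1 − k²), l = (1 − k')/(1 + k'), and M = 1/(1 + k'). Then K(k) = 2 M K(l), where K is the complete elliptic integral of the first kind. -/
open Real MeasureTheory Set intervalIntegral


/-- The complete elliptic integral of the first kind. -/
noncomputable def ellipticK (l : ℝ) : ℝ :=
  ∫ t in (0:ℝ)..1, 1 / Real.sqrt ((1 - l ^ 2 * t ^ 2) * (1 - t ^ 2))

/-- **Landen's transformation** (first half): for `0 < k < 1`, with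
`k' = √(1 − k²)`, `l = (1 − k')/(1 + k')` and `M = 1/(1 + k')`, one has
`K(k) = 2 M K(l)`. -/
theorem landen_K (k : ℝ) (hk0 : 0 < k) (hk1 : k < 1) :
    ellipticK k
      = 2 * (1 / (1 + Real.sqrt (1 - k ^ 2)))
        * ellipticK ((1 - Real.sqrt (1 - k ^ 2)) / (1 + Real.sqrt (1 - k ^ 2))) := by
  set c := Real.sqrt (1 - k ^ 2) with hc
  have hk2pos : (0:ℝ) < 1 - k ^ 2 := by nlinarith
  have hc0 : 0 < c := Real.sqrt_pos.2 hk2pos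
  have hcsq : c ^ 2 = 1 - k ^ 2 := Real.sq_sqrt hk2pos.le
  have hc1 : c < 1 := by nlinarith
  set x := (1 - c) / (1 + c) with hx
  have h1c : (0:ℝ) < 1 + c := by linarith
  have hx0 : 0 < x := div_pos (by linarith) h1c
  have hx1 : x < 1 := by rw [hx, div_lt_one h1c]; linarith
  have h1x : (0:ℝ) < 1 + x := by linarith
  have hk2 : k ^ 2 = 4 * x / (1 + x) ^ 2 := by
    rw [hx]
    have hne : (1:ℝ) + c ≠ 0 := h1c.ne'
    field_simp
    nlinarith [hcsq]
  set φ : ℝ → ℝ := fun s => (1 + x) * s / (1 + x * s ^ 2) with hφ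
  have hD : ∀ s : ℝ, (0:ℝ) < 1 + x * s ^ 2 := fun s => by positivity
  have hderiv : ∀ s : ℝ, HasDerivAt φ ((1 + x) * (1 - x * s ^ 2) / (1 + x * s ^ 2) ^ 2) s := by
    intro s
    have h1 : HasDerivAt (fun s : ℝ => (1 + x) * s) (1 + x) s := by
      simpa using (hasDerivAt_id s).const_mul (1 + x)
    have h2 : HasDerivAt (fun s : ℝ => 1 + x * s ^ 2) (x * (2 * s)) s := by
      simpa using ((hasDerivAt_pow 2 s).const_mul x).const_add 1
    have := h1.div h2 (hD s).ne'
    convert this using 1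
    case e'_9 => ring
    all_goals rfl
  have hcont : Continuous φ := by
    apply Continuous.div (continuous_const.mul continuous_id)
      (continuous_const.add (continuous_const.mul (continuous_pow 2))) (fun s => (hD s).ne')
  have hmono : StrictMonoOn φ (Icc 0 1) := by
    apply strictMonoOn_of_deriv_pos (convex_Icc 0 1) hcont.continuousOn
    intro s hs
    rw [interior_Icc] at hs
    rw [(hderiv s).deriv]
    have hxs : (0:ℝ) < 1 - x * s ^ 2 := by nlinarith [hs.1, hs.2]
    have := hD s
    positivity
  have hφ0 : φ 0 = 0 := by simp [hφ]
  have hφ1 : φ 1 = 1 := by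
    simp only [hφ, one_pow, mul_one]
    exact div_self h1x.ne'
  have himg : φ '' Ioo 0 1 = Ioo 0 1 := by
    apply Subset.antisymm
    · rintro _ ⟨s, hs, rfl⟩
      constructor
      · rw [← hφ0]
        exact hmono (by simp) ⟨hs.1.le, hs.2.le⟩ hs.1
      · rw [← hφ1]
        exact hmono ⟨hs.1.le, hs.2.le⟩ (by simp) hs.2
    · have := intermediate_value_Ioo (zero_le_one) hcont.continuousOn (a := (0:ℝ)) (b := 1)
      rwa [hφ0, hφ1] at this
  have hinj : InjOn φ (Ioo 0 1) := (hmono.injOn).mono Ioo_subset_Icc_self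
  have hg : ∀ s ∈ Ioo (0:ℝ) 1,
      |(1 + x) * (1 - x * s ^ 2) / (1 + x * s ^ 2) ^ 2| *
        (1 / Real.sqrt ((1 - k ^ 2 * φ s ^ 2) * (1 - φ s ^ 2)))
      = (1 + x) * (1 / Real.sqrt ((1 - x ^ 2 * s ^ 2) * (1 - s ^ 2))) := by
    intro s hs
    obtain ⟨hs0, hs1⟩ := hs
    have hA : (0:ℝ) < 1 - s ^ 2 := by nlinarith
    have hB : (0:ℝ) < 1 - x ^ 2 * s ^ 2 := by nlinarith
    have hC : (0:ℝ) < 1 - x * s ^ 2 := by nlinarith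
    have hDs := hD s
    have hid : (1 - k ^ 2 * φ s ^ 2) * (1 - φ s ^ 2)
        = ((1 - x * s ^ 2) / (1 + x * s ^ 2) ^ 2) ^ 2 * ((1 - x ^ 2 * s ^ 2) * (1 - s ^ 2)) := by
      simp only [hφ, hk2]
      field_simp
      ring
    rw [hid, Real.sqrt_mul (sq_nonneg _), Real.sqrt_sq (by positivity)]
    rw [abs_of_nonneg (by positivity)]
    have hE : (0:ℝ) < Real.sqrt ((1 - x ^ 2 * s ^ 2) * (1 - s ^ 2)) :=
      Real.sqrt_pos.2 (by positivity)
    field_simp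
  have key : (∫ t in Ioo (0:ℝ) 1, 1 / Real.sqrt ((1 - k ^ 2 * t ^ 2) * (1 - t ^ 2)))
      = ∫ s in Ioo (0:ℝ) 1, (1 + x) * (1 / Real.sqrt ((1 - x ^ 2 * s ^ 2) * (1 - s ^ 2))) := by
    conv_lhs => rw [← himg]
    rw [MeasureTheory.integral_image_eq_integral_abs_deriv_smul measurableSet_Ioo
      (fun s _ => (hderiv s).hasDerivWithinAt) hinj]
    apply MeasureTheory.setIntegral_congr_fun measurableSet_Ioo
    intro s hs
    simp only [smul_eq_mul]
    exact hg s hs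
  have h2M : 2 * (1 / (1 + c)) = 1 + x := by
    rw [hx]
    field_simp
    ring
  rw [ellipticK, ellipticK, intervalIntegral.integral_of_le zero_le_one,
      intervalIntegral.integral_of_le zero_le_one, MeasureTheory.integral_Ioc_eq_integral_Ioo,
      MeasureTheory.integral_Ioc_eq_integral_Ioo, key, MeasureTheory.integral_const_mul, h2M]
end

section
/- Let 0 < k < 1, k' = √(1 − k²), l' = √(1 − l²) where l = (1 − k')/(1 + k'), and M = 1/(1 + k'). Then K(k') = M K(l'), where K is the complete elliptic integral of the first kind. -/
open Real MeasureTheory intervalIntegral Set Filter Topology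

lemma landen_integrable {l : ℝ} (hl : l ^ 2 < 1) :
    IntervalIntegrable (fun t => 1 / Real.sqrt ((1 - l ^ 2 * t ^ 2) * (1 - t ^ 2)))
      volume 0 1 := by
  have hbase : IntervalIntegrable (fun t : ℝ => (1 - t) ^ (-(1/2) : ℝ)) volume 0 1 := by
    simpa using ((intervalIntegrable_rpow' (a := (0:ℝ)) (b := 1)
      (r := (-(1/2) : ℝ)) (by norm_num)).comp_sub_left 1).symm
  have hbound : IntervalIntegrable
      (fun t : ℝ => (Real.sqrt (1 - l ^ 2))⁻¹ * (1 - t) ^ (-(1/2) : ℝ)) volume 0 1 :=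
    hbase.const_mul _
  refine hbound.mono_fun ?_ ?_
  · apply Measurable.aestronglyMeasurable
    fun_prop
  · filter_upwards [ae_restrict_mem measurableSet_uIoc] with t ht
    rw [uIoc_of_le (by norm_num : (0:ℝ) ≤ 1)] at ht
    obtain ⟨ht0, ht1⟩ := ht
    have hl0 : (0:ℝ) < 1 - l ^ 2 := by linarith
    have ht2 : t ^ 2 ≤ 1 := by nlinarith
    have h1 : 1 - l ^ 2 ≤ 1 - l ^ 2 * t ^ 2 := by
      nlinarith [mul_nonneg (sq_nonneg l) (by linarith : (0:ℝ) ≤ 1 - t ^ 2)]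
    have h2 : 1 - t ≤ 1 - t ^ 2 := by nlinarith
    have h3 : (1 - l ^ 2) * (1 - t) ≤ (1 - l ^ 2 * t ^ 2) * (1 - t ^ 2) :=
      mul_le_mul h1 h2 (by linarith) (by linarith)
    have hnn : (0:ℝ) ≤ 1 / Real.sqrt ((1 - l ^ 2 * t ^ 2) * (1 - t ^ 2)) := by positivity
    rw [Real.norm_eq_abs, Real.norm_eq_abs, abs_of_nonneg hnn,
      abs_of_nonneg (mul_nonneg (inv_nonneg.mpr (Real.sqrt_nonneg _)) (Real.rpow_nonneg (by linarith) _))]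
    have hrw : (1 - t) ^ (-(1/2) : ℝ) = (Real.sqrt (1 - t))⁻¹ := by
      rw [Real.rpow_neg (by linarith), ← Real.sqrt_eq_rpow]
    rw [hrw, ← mul_inv, ← Real.sqrt_mul hl0.le, one_div]
    rcases lt_or_eq_of_le ht1 with h | h
    · exact inv_anti₀ (Real.sqrt_pos.mpr (by nlinarith)) (Real.sqrt_le_sqrt h3)
    · subst h
      simp

lemma landen_contOn {l : ℝ} (hl : l ^ 2 < 1) :
    ContinuousOn (fun s => 1 / Real.sqrt ((1 - l ^ 2 * s ^ 2) * (1 - s ^ 2)))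
      (Ioo (-1 : ℝ) 1) := by
  intro s hs
  obtain ⟨hs1, hs2⟩ := hs
  have hs2' : s ^ 2 < 1 := by nlinarith
  have hP : 0 < (1 - l ^ 2 * s ^ 2) * (1 - s ^ 2) := by
    have h1 : l ^ 2 * s ^ 2 < 1 := by
      nlinarith [mul_nonneg (by linarith [sq_nonneg l] : (0:ℝ) ≤ 1 - l ^ 2) (sq_nonneg s)]
    exact mul_pos (by linarith) (by linarith)
  apply ContinuousAt.continuousWithinAt
  exact ContinuousAt.div continuousAt_const
    ((Real.continuous_sqrt.continuousAt).comp (by fun_prop))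
    (ne_of_gt (Real.sqrt_pos.mpr hP))

/-- Ascending Landen transformation: `K(2√k/(1+k)) = (1+k) K(k)`. -/
lemma landen_ascending (k : ℝ) (hk0 : 0 < k) (hk1 : k < 1) :
    ellipticK (2 * Real.sqrt k / (1 + k)) = (1 + k) * ellipticK k := by
  set l : ℝ := 2 * Real.sqrt k / (1 + k) with hl_def
  have hk1' : (0:ℝ) < 1 + k := by linarith
  have hsq : Real.sqrt k ^ 2 = k := Real.sq_sqrt hk0.le
  have hl2 : l ^ 2 = 4 * k / (1 + k) ^ 2 := by
    rw [hl_def, div_pow, mul_pow, hsq]; ring_nf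
  have hl2lt : l ^ 2 < 1 := by
    rw [hl2, div_lt_one (by positivity)]; nlinarith
  have hk2lt : k ^ 2 < 1 := by nlinarith
  set fK : ℝ → ℝ := fun t => 1 / Real.sqrt ((1 - k ^ 2 * t ^ 2) * (1 - t ^ 2)) with hfK
  set fL : ℝ → ℝ := fun s => 1 / Real.sqrt ((1 - l ^ 2 * s ^ 2) * (1 - s ^ 2)) with hfL
  set g : ℝ → ℝ := fun t => (1 + k) * t / (1 + k * t ^ 2) with hg_def
  have hC : ∀ t : ℝ, (0:ℝ) < 1 + k * t ^ 2 := fun t => by positivity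
  -- derivative of g
  have hder : ∀ t : ℝ, HasDerivAt g ((1 + k) * (1 - k * t ^ 2) / (1 + k * t ^ 2) ^ 2) t := by
    intro t
    have h1 : HasDerivAt (fun t : ℝ => (1 + k) * t) (1 + k) t := by
      simpa using (hasDerivAt_id t).const_mul (1 + k)
    have h2 : HasDerivAt (fun t : ℝ => 1 + k * t ^ 2) (k * (2 * t)) t := by
      have := (hasDerivAt_pow 2 t).const_mul k
      simpa using this.const_add 1
    have := h1.div h2 (ne_of_gt (hC t))
    exact this.congr_deriv (by ring)
  -- key identity for b < 1
  have key : ∀ b : ℝ, 0 ≤ b → b < 1 →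
      (∫ s in (0:ℝ)..(g b), fL s) = (1 + k) * ∫ t in (0:ℝ)..b, fK t := by
    intro b hb0 hb1
    have himg : g '' (uIcc 0 b) ⊆ Ioo (-1 : ℝ) 1 := by
      rintro s ⟨t, ht, rfl⟩
      rw [uIcc_of_le hb0] at ht
      obtain ⟨ht0, htb⟩ := ht
      have ht1 : t < 1 := lt_of_le_of_lt htb hb1
      constructor
      · have : 0 ≤ g t := by rw [hg_def]; positivity
        linarith
      · rw [hg_def]
        simp only
        rw [div_lt_one (hC t)]
        nlinarith [mul_pos (by linarith : (0:ℝ) < 1 - t)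
          (by nlinarith : (0:ℝ) < 1 - k * t)]
    have hcv := integral_comp_smul_deriv'
      (f := g) (f' := fun t => (1 + k) * (1 - k * t ^ 2) / (1 + k * t ^ 2) ^ 2)
      (g := fL) (a := 0) (b := b)
      (fun t _ => hder t)
      (by
        apply Continuous.continuousOn
        apply Continuous.div (by fun_prop) (by fun_prop)
        intro t
        positivity)
      ((landen_contOn hl2lt).mono himg)
    have hg0 : g 0 = 0 := by simp [hg_def]
    rw [hg0] at hcv
    rw [← hcv]
    rw [← intervalIntegral.integral_const_mul]
    apply intervalIntegral.integral_congr
    intro t ht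
    rw [uIcc_of_le hb0] at ht
    obtain ⟨ht0, htb⟩ := ht
    have ht1 : t < 1 := lt_of_le_of_lt htb hb1
    have hB : (0:ℝ) < 1 - k * t ^ 2 := by nlinarith
    have hA : (0:ℝ) < (1 - k ^ 2 * t ^ 2) * (1 - t ^ 2) :=
      mul_pos (by nlinarith) (by nlinarith)
    have hCt := hC t
    -- compute fL (g t)
    have h1g : 1 - l ^ 2 * (g t) ^ 2 = (1 - k * t ^ 2) ^ 2 / (1 + k * t ^ 2) ^ 2 := by
      rw [hg_def, hl2]
      field_simp
      ring
    have h2g : 1 - (g t) ^ 2 = (1 - k ^ 2 * t ^ 2) * (1 - t ^ 2) / (1 + k * t ^ 2) ^ 2 := by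
      rw [hg_def]
      field_simp
      ring
    have hprod : (1 - l ^ 2 * (g t) ^ 2) * (1 - (g t) ^ 2)
        = ((1 - k * t ^ 2) / (1 + k * t ^ 2) ^ 2) ^ 2
          * ((1 - k ^ 2 * t ^ 2) * (1 - t ^ 2)) := by
      rw [h1g, h2g]
      field_simp
    have hsqrt : Real.sqrt ((1 - l ^ 2 * (g t) ^ 2) * (1 - (g t) ^ 2))
        = (1 - k * t ^ 2) / (1 + k * t ^ 2) ^ 2
          * Real.sqrt ((1 - k ^ 2 * t ^ 2) * (1 - t ^ 2)) := by
      rw [hprod, Real.sqrt_mul (sq_nonneg _), Real.sqrt_sq (by positivity)]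
    have hsA : (0:ℝ) < Real.sqrt ((1 - k ^ 2 * t ^ 2) * (1 - t ^ 2)) :=
      Real.sqrt_pos.mpr hA
    simp only [Function.comp_apply, smul_eq_mul, hfL, hfK]
    rw [hsqrt]
    set sA := Real.sqrt ((1 - k ^ 2 * t ^ 2) * (1 - t ^ 2)) with hsA_def
    rw [div_mul_eq_mul_div, one_div, mul_inv, ← div_eq_mul_inv]
    field_simp
  -- now take limits b → 1⁻
  have hintK := landen_integrable hk2lt
  have hintL := landen_integrable hl2lt
  set F : ℝ → ℝ := fun b => ∫ t in (0:ℝ)..b, fK t with hF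
  set G : ℝ → ℝ := fun b => ∫ s in (0:ℝ)..b, fL s with hG
  have hcontF : ContinuousOn F (uIcc 0 1) :=
    intervalIntegral.continuousOn_primitive_interval' hintK left_mem_uIcc
  have hcontG : ContinuousOn G (uIcc 0 1) :=
    intervalIntegral.continuousOn_primitive_interval' hintL left_mem_uIcc
  have huIcc : uIcc (0:ℝ) 1 = Icc 0 1 := uIcc_of_le (by norm_num)
  have hgcont : ContinuousAt g 1 := by
    apply ContinuousAt.div (by fun_prop) (by fun_prop)
    exact ne_of_gt (hC 1)
  have hg1 : g 1 = 1 := by rw [hg_def]; field_simp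
  -- Tendsto of g within Iio 1 towards 1 within Icc 0 1
  have htg : Tendsto g (𝓝[<] (1:ℝ)) (𝓝[Icc (0:ℝ) 1] 1) := by
    apply tendsto_nhdsWithin_of_tendsto_nhds_of_eventually_within
    · have h := hgcont.tendsto
      rw [hg1] at h
      exact h.mono_left nhdsWithin_le_nhds
    · filter_upwards [Ioo_mem_nhdsLT_of_mem (by norm_num : (1:ℝ) ∈ Ioc 0 1)] with b hb
      obtain ⟨hb0, hb1⟩ := hb
      constructor
      · rw [hg_def]; positivity
      · have : g b < 1 := by
          rw [hg_def]
          simp only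
          rw [div_lt_one (hC b)]
          nlinarith [mul_pos (by linarith : (0:ℝ) < 1 - b)
            (by nlinarith : (0:ℝ) < 1 - k * b)]
        linarith
  have htG : Tendsto (fun b => G (g b)) (𝓝[<] (1:ℝ)) (𝓝 (G 1)) := by
    have := (hcontG 1 (by rw [huIcc]; exact ⟨by norm_num, le_refl 1⟩))
    rw [huIcc] at this
    exact this.tendsto.comp htg
  have hid : Tendsto (fun b : ℝ => b) (𝓝[<] (1:ℝ)) (𝓝[Icc (0:ℝ) 1] 1) := by
    apply tendsto_nhdsWithin_of_tendsto_nhds_of_eventually_within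
    · exact tendsto_id.mono_left nhdsWithin_le_nhds
    · filter_upwards [Ioo_mem_nhdsLT_of_mem (by norm_num : (1:ℝ) ∈ Ioc 0 1)] with b hb
      exact ⟨hb.1.le, hb.2.le⟩
  have htF : Tendsto (fun b => (1 + k) * F b) (𝓝[<] (1:ℝ)) (𝓝 ((1 + k) * F 1)) := by
    apply Tendsto.const_mul
    have := (hcontF 1 (by rw [huIcc]; exact ⟨by norm_num, le_refl 1⟩))
    rw [huIcc] at this
    exact this.tendsto.comp hid
  have heq : (fun b => G (g b)) =ᶠ[𝓝[<] (1:ℝ)] fun b => (1 + k) * F b := by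
    filter_upwards [Ioo_mem_nhdsLT_of_mem (by norm_num : (1:ℝ) ∈ Ioc 0 1)] with b hb
    exact key b hb.1.le hb.2
  have hfinal : G 1 = (1 + k) * F 1 := tendsto_nhds_unique (htG.congr' heq) htF
  have hG1 : G 1 = ellipticK l := rfl
  have hF1 : F 1 = ellipticK k := rfl
  rw [hG1, hF1] at hfinal
  exact hfinal

/-- **Landen's transformation** (complementary half): for `0 < k < 1`, with
`k' = √(1 − k²)`, `l = (1 − k')/(1 + k')`, `l' = √(1 − l²)` and
`M = 1/(1 + k')`, one has `K(k') = M K(l')`. -/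
theorem landen_K_complementary (k : ℝ) (hk0 : 0 < k) (hk1 : k < 1) :
    ellipticK (Real.sqrt (1 - k ^ 2))
      = (1 / (1 + Real.sqrt (1 - k ^ 2)))
        * ellipticK (Real.sqrt
            (1 - ((1 - Real.sqrt (1 - k ^ 2)) / (1 + Real.sqrt (1 - k ^ 2))) ^ 2)) := by
  set x : ℝ := Real.sqrt (1 - k ^ 2) with hx_def
  have hx2 : x ^ 2 = 1 - k ^ 2 := Real.sq_sqrt (by nlinarith)
  have hx0 : 0 < x := Real.sqrt_pos.mpr (by nlinarith)
  have hx1 : x < 1 := by nlinarith [hx2, sq_nonneg x]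
  have hx1' : (0:ℝ) < 1 + x := by linarith
  have harg : Real.sqrt (1 - ((1 - x) / (1 + x)) ^ 2) = 2 * Real.sqrt x / (1 + x) := by
    have h1 : 1 - ((1 - x) / (1 + x)) ^ 2 = (2 * Real.sqrt x / (1 + x)) ^ 2 := by
      have hs : Real.sqrt x ^ 2 = x := Real.sq_sqrt hx0.le
      field_simp
      nlinarith [hs]
    rw [h1, Real.sqrt_sq (by positivity)]
  rw [harg, landen_ascending x hx0 hx1]
  field_simp
end
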